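/- For a Kirchhoff-Love deformation V = ωN + θ_*W − t∇ω of the normal bundle, the strain tensor e = ½ L_V δ|_M (half the Lie derivative of the induced metric) satisfies e(X, N) = 0 for every vector X tangent to the parallel surfaces, and e(N, N) = 0; i.e., e_{33} = 0 and e_{3α} = 0 in the chart Φ. -/

import Mathlib

/-- For a Kirchhoff-Love (bundle-preserving) deformation
`Φ_ε(q,t) = φ_ε(q) + t n_ε(q)` of the normal bundle, the strain tensor
`e_{ij} = ½ (d/dε)|_{ε=0} (∂_i Φ_ε · ∂_j Φ_ε)` satisfies `e_{33} = 0` and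
`e_{3α} = 0` (α = 1,2) in the chart `Φ`; i.e. `e(X, N) = 0` for `X` tangent to the
parallel surfaces and `e(N, N) = 0`.  Here `∂_3 Φ_ε = n_ε` and
`∂_α Φ_ε = ∂_α φ_ε + t ∂_α n_ε`. -/
theorem strain_normal_components_vanish
    (φf nf : ℝ → (Fin 2 → ℝ) → EuclideanSpace ℝ (Fin 3))
    (q : Fin 2 → ℝ) (t : ℝ)
    (hunit : ∀ ε q', (inner ℝ (nf ε q') (nf ε q') : ℝ) = 1)
    (horth : ∀ ε q' α, (inner ℝ (nf ε q') (fderiv ℝ (φf ε) q' (Pi.single α 1)) : ℝ) = 0)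
    (hdφ : ∀ ε, DifferentiableAt ℝ (φf ε) q)
    (hdn : ∀ ε, DifferentiableAt ℝ (nf ε) q) :
    ((1 : ℝ) / 2) * deriv (fun ε => (inner ℝ (nf ε q) (nf ε q) : ℝ)) 0 = 0 ∧
      ∀ α : Fin 2, ((1 : ℝ) / 2) * deriv (fun ε =>
        (inner ℝ (nf ε q)
          (fderiv ℝ (fun q' => φf ε q' + t • nf ε q') q (Pi.single α 1)) : ℝ)) 0 = 0 := by
  have hnn : ∀ ε (α : Fin 2),
      (inner ℝ (nf ε q) (fderiv ℝ (nf ε) q (Pi.single α 1)) : ℝ) = 0 := by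
    intro ε α
    have hconst : (fun q' => (inner ℝ (nf ε q') (nf ε q') : ℝ)) = fun _ => (1 : ℝ) := by
      funext q'; exact hunit ε q'
    have h0 : fderiv ℝ (fun q' => (inner ℝ (nf ε q') (nf ε q') : ℝ)) q (Pi.single α 1) = 0 := by
      rw [hconst, fderiv_fun_const]; simp
    rw [fderiv_inner_apply (𝕜 := ℝ) (hdn ε) (hdn ε)] at h0
    have hsym : (inner ℝ (fderiv ℝ (nf ε) q (Pi.single α 1)) (nf ε q) : ℝ)
        = inner ℝ (nf ε q) (fderiv ℝ (nf ε) q (Pi.single α 1)) := real_inner_comm _ _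
    rw [hsym] at h0
    linarith
  constructor
  · have : (fun ε => (inner ℝ (nf ε q) (nf ε q) : ℝ)) = fun _ => (1 : ℝ) := by
      funext ε; exact hunit ε q
    rw [this, deriv_const]; ring
  · intro α
    have : (fun ε => (inner ℝ (nf ε q)
        (fderiv ℝ (fun q' => φf ε q' + t • nf ε q') q (Pi.single α 1)) : ℝ))
        = fun _ => (0 : ℝ) := by
      funext ε
      have hd : fderiv ℝ (fun q' => φf ε q' + t • nf ε q') q
          = fderiv ℝ (φf ε) q + t • fderiv ℝ (nf ε) q := by
        rw [fderiv_fun_add (g := fun q' => t • nf ε q') (hdφ ε) ((hdn ε).const_smul t), fderiv_fun_const_smul (hdn ε)]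
      rw [hd]
      simp only [ContinuousLinearMap.add_apply, ContinuousLinearMap.smul_apply,
        inner_add_right, inner_smul_right]
      rw [horth ε q α, hnn ε α]
      simp
    rw [this, deriv_const]; ring
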